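/- Let k ∈ ℕ and let M, M' ∈ 𝔽₂^{k×k} be skew-symmetric such that M + M' is invertible over 𝔽₂. For w ∈ 𝔽₂^k define u_{M,w} ∈ ℝ^{𝔽₂^k} by u_{M,w}(x) := 2^{−k/2}·(−1)^{Q_M(x)+wᵀx}, and similarly u_{M',w'}. Then for every w, w' ∈ 𝔽₂^k, ⟨u_{M,w}, u_{M',w'}⟩² = 2^{−k}; that is, the orthonormal bases {u_{M,w}}_{w} and {u_{M',w'}}_{w'} are unbiased. -/

import Mathlib

open Matrix

/-- The quadratic form `Q_M(x) = xᵀ M̃ x` where `M̃` is the strictly upper-triangular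
part of `M`. -/
def Qform (k : ℕ) (M : Matrix (Fin k) (Fin k) (ZMod 2)) (x : Fin k → ZMod 2) : ZMod 2 :=
  x ⬝ᵥ (Matrix.of fun i j : Fin k => if (i : ℕ) < (j : ℕ) then M i j else 0).mulVec x

/-- The vector `u_{M,w} ∈ ℝ^{𝔽₂^k}` with `u_{M,w}(x) = 2^{−k/2}·(−1)^{Q_M(x)+wᵀx}`. -/
noncomputable def kerdockVec (k : ℕ) (M : Matrix (Fin k) (Fin k) (ZMod 2))
    (w : Fin k → ZMod 2) (x : Fin k → ZMod 2) : ℝ :=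
  ((Real.sqrt 2)⁻¹) ^ k * (-1 : ℝ) ^ (Qform k M x + w ⬝ᵥ x).val

/-- The sign character of `ZMod 2`. -/
noncomputable def chi (a : ZMod 2) : ℝ := (-1) ^ a.val

lemma chi_add (a b : ZMod 2) : chi (a + b) = chi a * chi b := by
  unfold chi
  rw [ZMod.val_add, ← neg_one_pow_eq_pow_mod_two, pow_add]

lemma chi_zero : chi 0 = 1 := by simp [chi]

lemma chi_one : chi 1 = -1 := by simp [chi, show (1 : ZMod 2).val = 1 from rfl]

/-- Character sum over `𝔽₂^k`. -/
lemma char_sum (k : ℕ) (u : Fin k → ZMod 2) :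
    ∑ x : Fin k → ZMod 2, chi (u ⬝ᵥ x) = if u = 0 then (2 : ℝ) ^ k else 0 := by
  split_ifs with h
  · subst h
    simp only [zero_dotProduct, chi_zero, Finset.sum_const, Finset.card_univ, nsmul_eq_mul,
      mul_one]
    simp [Fintype.card_fun]
  · obtain ⟨i, hi⟩ := Function.ne_iff.mp h
    have hui : u i = 1 := by
      have hall : ∀ a : ZMod 2, a ≠ 0 → a = 1 := by decide
      exact hall _ hi
    set e : Fin k → ZMod 2 := Pi.single i 1 with he
    have key : ∑ x : Fin k → ZMod 2, chi (u ⬝ᵥ x)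
        = ∑ x : Fin k → ZMod 2, chi (u ⬝ᵥ (x + e)) :=
      (Fintype.sum_equiv (Equiv.addRight e)
        (fun x => chi (u ⬝ᵥ (x + e))) (fun x => chi (u ⬝ᵥ x)) (fun x => by simp)).symm
    have hue : u ⬝ᵥ e = 1 := by
      rw [he]
      have := dotProduct_single (v := u) (i := i) (x := (1 : ZMod 2))
      simpa [hui] using this
    have key2 : ∀ x : Fin k → ZMod 2, chi (u ⬝ᵥ (x + e)) = - chi (u ⬝ᵥ x) := by
      intro x
      rw [dotProduct_add, chi_add, hue, chi_one]
      ring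
    have : ∑ x : Fin k → ZMod 2, chi (u ⬝ᵥ x)
        = - ∑ x : Fin k → ZMod 2, chi (u ⬝ᵥ x) :=
      calc ∑ x : Fin k → ZMod 2, chi (u ⬝ᵥ x)
          = ∑ x : Fin k → ZMod 2, chi (u ⬝ᵥ (x + e)) := key
        _ = ∑ x : Fin k → ZMod 2, -chi (u ⬝ᵥ x) :=
            Finset.sum_congr rfl fun x _ => key2 x
        _ = - ∑ x : Fin k → ZMod 2, chi (u ⬝ᵥ x) := Finset.sum_neg_distrib _
    linarith

/-- The strictly upper-triangular part. -/
def upt (k : ℕ) (M : Matrix (Fin k) (Fin k) (ZMod 2)) : Matrix (Fin k) (Fin k) (ZMod 2) :=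
  Matrix.of fun i j : Fin k => if (i : ℕ) < (j : ℕ) then M i j else 0

lemma Qform_eq (k : ℕ) (M : Matrix (Fin k) (Fin k) (ZMod 2)) (x : Fin k → ZMod 2) :
    Qform k M x = x ⬝ᵥ (upt k M) *ᵥ x := rfl

lemma upt_add (k : ℕ) (M M' : Matrix (Fin k) (Fin k) (ZMod 2)) :
    upt k (M + M') = upt k M + upt k M' := by
  ext i j
  simp only [upt, Matrix.of_apply, Matrix.add_apply]
  split_ifs <;> simp

lemma upt_add_transpose (k : ℕ) (N : Matrix (Fin k) (Fin k) (ZMod 2))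
    (hdiag : ∀ i, N i i = 0) (hsym : ∀ i j, N i j = N j i) :
    upt k N + (upt k N)ᵀ = N := by
  ext i j
  simp only [upt, Matrix.add_apply, Matrix.transpose_apply, Matrix.of_apply]
  rcases lt_trichotomy (i : ℕ) (j : ℕ) with h | h | h
  · rw [if_pos h, if_neg (by omega)]; ring
  · have : i = j := Fin.ext h
    subst this
    simp [hdiag]
  · rw [if_neg (by omega), if_pos h, hsym]; ring

lemma Qform_add_arg (k : ℕ) (N : Matrix (Fin k) (Fin k) (ZMod 2))
    (hdiag : ∀ i, N i i = 0) (hsym : ∀ i j, N i j = N j i) (x z : Fin k → ZMod 2) :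
    Qform k N (x + z) = Qform k N x + Qform k N z + x ⬝ᵥ N *ᵥ z := by
  have hz : z ⬝ᵥ (upt k N) *ᵥ x = x ⬝ᵥ (upt k N)ᵀ *ᵥ z := by
    rw [dotProduct_mulVec, dotProduct_comm, ← mulVec_transpose]
  rw [Qform_eq, Qform_eq, Qform_eq, mulVec_add, dotProduct_add, add_dotProduct,
    add_dotProduct, hz]
  have : x ⬝ᵥ (upt k N) *ᵥ z + x ⬝ᵥ (upt k N)ᵀ *ᵥ z = x ⬝ᵥ N *ᵥ z := by
    rw [← dotProduct_add, ← add_mulVec, upt_add_transpose k N hdiag hsym]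
  linear_combination this

lemma Qform_add_mat (k : ℕ) (M M' : Matrix (Fin k) (Fin k) (ZMod 2)) (x : Fin k → ZMod 2) :
    Qform k (M + M') x = Qform k M x + Qform k M' x := by
  rw [Qform_eq, Qform_eq, Qform_eq, upt_add, add_mulVec, dotProduct_add]

/-- For skew-symmetric `M, M' ∈ 𝔽₂^{k×k}` with `M + M'` invertible over
`𝔽₂`, the orthonormal bases `{u_{M,w}}_w` and `{u_{M',w'}}_{w'}` are unbiased:
`⟨u_{M,w}, u_{M',w'}⟩² = 2^{−k}` for all `w, w'`. -/
theorem stmt_9 (k : ℕ) (M M' : Matrix (Fin k) (Fin k) (ZMod 2))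
    (hdiag : ∀ i, M i i = 0) (hsym : ∀ i j, M i j = M j i)
    (hdiag' : ∀ i, M' i i = 0) (hsym' : ∀ i j, M' i j = M' j i)
    (hinv : IsUnit (M + M')) :
    ∀ w w' : Fin k → ZMod 2,
      (∑ x : Fin k → ZMod 2, kerdockVec k M w x * kerdockVec k M' w' x) ^ 2
        = ((2 : ℝ) ^ k)⁻¹ := by
  intro w w'
  set N := M + M' with hN
  set v := w + w' with hv
  have hNdiag : ∀ i, N i i = 0 := by
    intro i; simp [hN, Matrix.add_apply, hdiag, hdiag']
  have hNsym : ∀ i j, N i j = N j i := by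
    intro i j; simp [hN, Matrix.add_apply, hsym i j, hsym' i j]
  -- injectivity of N *ᵥ ·
  have hNinj : ∀ z : Fin k → ZMod 2, N *ᵥ z = 0 → z = 0 := by
    intro z hz
    have hdet : IsUnit N.det := (Matrix.isUnit_iff_isUnit_det N).mp hinv
    have h1 : N⁻¹ * N = 1 := Matrix.nonsing_inv_mul N hdet
    calc z = (N⁻¹ * N) *ᵥ z := by rw [h1, Matrix.one_mulVec]
      _ = N⁻¹ *ᵥ (N *ᵥ z) := by rw [← Matrix.mulVec_mulVec]
      _ = 0 := by rw [hz, Matrix.mulVec_zero]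
  -- rewrite summand
  have hsummand : ∀ x : Fin k → ZMod 2,
      kerdockVec k M w x * kerdockVec k M' w' x
        = ((2 : ℝ)⁻¹) ^ k * chi (Qform k N x + v ⬝ᵥ x) := by
    intro x
    unfold kerdockVec
    have hs : ((Real.sqrt 2)⁻¹) ^ k * ((Real.sqrt 2)⁻¹) ^ k = ((2 : ℝ)⁻¹) ^ k := by
      have h2 : Real.sqrt 2 * Real.sqrt 2 = 2 := Real.mul_self_sqrt (by norm_num)
      rw [← mul_pow, ← mul_inv, h2]
    have hq : Qform k N x + v ⬝ᵥ x
        = (Qform k M x + w ⬝ᵥ x) + (Qform k M' x + w' ⬝ᵥ x) := by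
      rw [hN, hv, Qform_add_mat, add_dotProduct]
      ring
    have hchi : (-1 : ℝ) ^ (Qform k M x + w ⬝ᵥ x).val
        * (-1 : ℝ) ^ (Qform k M' x + w' ⬝ᵥ x).val = chi (Qform k N x + v ⬝ᵥ x) := by
      rw [hq, chi_add]; rfl
    calc ((Real.sqrt 2)⁻¹) ^ k * (-1 : ℝ) ^ (Qform k M x + w ⬝ᵥ x).val
          * (((Real.sqrt 2)⁻¹) ^ k * (-1 : ℝ) ^ (Qform k M' x + w' ⬝ᵥ x).val)
        = (((Real.sqrt 2)⁻¹) ^ k * ((Real.sqrt 2)⁻¹) ^ k)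
          * ((-1 : ℝ) ^ (Qform k M x + w ⬝ᵥ x).val
            * (-1 : ℝ) ^ (Qform k M' x + w' ⬝ᵥ x).val) := by ring
      _ = ((2 : ℝ)⁻¹) ^ k * chi (Qform k N x + v ⬝ᵥ x) := by rw [hs, hchi]
  set S : ℝ := ∑ x : Fin k → ZMod 2, chi (Qform k N x + v ⬝ᵥ x) with hS
  have hsum : ∑ x : Fin k → ZMod 2, kerdockVec k M w x * kerdockVec k M' w' x
      = ((2 : ℝ)⁻¹) ^ k * S := by
    rw [hS, Finset.mul_sum]
    exact Finset.sum_congr rfl (fun x _ => hsummand x)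
  -- compute S^2
  have hS2 : S ^ 2 = (2 : ℝ) ^ k := by
    have expand : S ^ 2 = ∑ x : Fin k → ZMod 2, ∑ y : Fin k → ZMod 2,
        chi (Qform k N x + v ⬝ᵥ x) * chi (Qform k N y + v ⬝ᵥ y) := by
      rw [sq, hS, Finset.sum_mul_sum]
    have shift : ∀ x : Fin k → ZMod 2,
        ∑ y : Fin k → ZMod 2, chi (Qform k N x + v ⬝ᵥ x) * chi (Qform k N y + v ⬝ᵥ y)
          = ∑ z : Fin k → ZMod 2,
              chi (Qform k N x + v ⬝ᵥ x) * chi (Qform k N (x + z) + v ⬝ᵥ (x + z)) := by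
      intro x
      exact (Fintype.sum_equiv (Equiv.addLeft x) _ _ (fun z => rfl)).symm
    have combine : ∀ x z : Fin k → ZMod 2,
        chi (Qform k N x + v ⬝ᵥ x) * chi (Qform k N (x + z) + v ⬝ᵥ (x + z))
          = chi (Qform k N z + v ⬝ᵥ z) * chi ((N *ᵥ z) ⬝ᵥ x) := by
      intro x z
      rw [← chi_add, ← chi_add]
      congr 1
      rw [Qform_add_arg k N hNdiag hNsym, dotProduct_add, dotProduct_comm (N *ᵥ z) x]
      have h2 : (2 : ZMod 2) = 0 := rfl
      linear_combination (Qform k N x + v ⬝ᵥ x) * h2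
    have step1 : S ^ 2 = ∑ z : Fin k → ZMod 2,
        chi (Qform k N z + v ⬝ᵥ z) * ∑ x : Fin k → ZMod 2, chi ((N *ᵥ z) ⬝ᵥ x) := by
      rw [expand]
      rw [show (∑ x : Fin k → ZMod 2, ∑ y : Fin k → ZMod 2,
            chi (Qform k N x + v ⬝ᵥ x) * chi (Qform k N y + v ⬝ᵥ y))
          = ∑ x : Fin k → ZMod 2, ∑ z : Fin k → ZMod 2,
            chi (Qform k N z + v ⬝ᵥ z) * chi ((N *ᵥ z) ⬝ᵥ x) from
        Finset.sum_congr rfl fun x _ => (shift x).trans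
          (Finset.sum_congr rfl fun z _ => combine x z)]
      rw [Finset.sum_comm]
      exact Finset.sum_congr rfl fun z _ => (Finset.mul_sum _ _ _).symm
    rw [step1]
    have hterm : ∀ z : Fin k → ZMod 2,
        chi (Qform k N z + v ⬝ᵥ z) * ∑ x : Fin k → ZMod 2, chi ((N *ᵥ z) ⬝ᵥ x)
          = if z = 0 then (2 : ℝ) ^ k else 0 := by
      intro z
      rw [char_sum]
      by_cases hz : z = 0
      · subst hz
        simp [Qform_eq, chi_zero, Matrix.mulVec_zero]
      · rw [if_neg hz, if_neg (fun h => hz (hNinj z h)), mul_zero]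
    simp only [hterm]
    simp
  have h2k : (2 : ℝ) ^ k ≠ 0 := by positivity
  rw [hsum, mul_pow, hS2, inv_pow, sq, mul_assoc, inv_mul_cancel₀ h2k, mul_one]
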